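/- (Tame directional multiplicity forces a critical point in the disk.) Let k be an algebraically closed field that is complete with respect to a nontrivial non-Archimedean absolute value |·|. Let m ≥ 1 and s ≥ 0 be integers with m + s ≥ 2, and let f, g ∈ k[X] be polynomials all of whose coefficients have absolute value ≤ 1, satisfying: |f.coeff i| < 1 for all i < m + s and |f.coeff (m+s)| = 1; |g.coeff j| < 1 for all j < s and |g.coeff s| = 1. If the image of m in k has absolute value 1 (i.e., the residue characteristic does not divide m), then the Wronskian f'·g − f·g' has a root x ∈ k with |x| < 1. -/

import Mathlib

open Polynomial

section Aux

variable {k : Type*} [NontriviallyNormedField k] [IsUltrametricDist k]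

lemma aux_norm_sub_le_max (a b : k) : ‖a - b‖ ≤ max ‖a‖ ‖b‖ := by
  rw [sub_eq_add_neg]
  simpa using IsUltrametricDist.norm_add_le_max a (-b)

lemma aux_mul_lt_left {a b : k} (ha : ‖a‖ < 1) (hb : ‖b‖ ≤ 1) : ‖a * b‖ < 1 := by
  rw [norm_mul]; nlinarith [norm_nonneg a, norm_nonneg b]

lemma aux_mul_lt_right {a b : k} (ha : ‖a‖ ≤ 1) (hb : ‖b‖ < 1) : ‖a * b‖ < 1 := by
  rw [norm_mul]; nlinarith [norm_nonneg a, norm_nonneg b]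

/-- Strict ultrametric bound for finite sums. -/
lemma aux_norm_sum_lt_one {ι : Type*} [Nonempty ι] (t : Finset ι) (F : ι → k)
    (h : ∀ i ∈ t, ‖F i‖ < 1) : ‖∑ i ∈ t, F i‖ < 1 := by
  obtain ⟨b, hb, hle⟩ := IsUltrametricDist.exists_norm_finset_sum_le t F
  rcases t.eq_empty_or_nonempty with rfl | ht
  · simp
  · exact lt_of_le_of_lt hle (h b (hb ht))

/-- If all roots of a polynomial have norm at least one, then every coefficient has norm
at most that of the constant coefficient. -/
lemma aux_coeff_le_coeff_zero [IsAlgClosed k] :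
    ∀ (d : ℕ) (P : k[X]), P.natDegree = d → (∀ z : k, P.IsRoot z → 1 ≤ ‖z‖) →
      ∀ n, ‖P.coeff n‖ ≤ ‖P.coeff 0‖ := by
  intro d
  induction d using Nat.strong_induction_on with
  | _ d IH =>
    intro P hdeg hroots n
    rcases eq_or_ne P 0 with rfl | hP0
    · simp
    rcases Nat.eq_zero_or_pos d with rfl | hd
    · obtain ⟨a, rfl⟩ := Polynomial.natDegree_eq_zero.mp hdeg
      rcases Nat.eq_zero_or_pos n with rfl | hn
      · exact le_rfl
      · simp [Polynomial.coeff_C, hn.ne', norm_nonneg]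
    · -- P has positive degree, so it has a root r
      have hdegP : 0 < P.natDegree := hdeg ▸ hd
      obtain ⟨r, hr⟩ := IsAlgClosed.exists_root P (by
        intro h
        rw [Polynomial.degree_eq_natDegree hP0] at h
        have : P.natDegree = 0 := Nat.cast_injective h
        omega)
      obtain ⟨Q, hQ⟩ := (Polynomial.dvd_iff_isRoot.mpr hr)
      have hQ0 : Q ≠ 0 := by
        rintro rfl; rw [mul_zero] at hQ; exact hP0 hQ
      have hXr : (X - C r) ≠ 0 := Polynomial.X_sub_C_ne_zero r
      have hdq : Q.natDegree = d - 1 := by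
        have := Polynomial.natDegree_mul hXr hQ0
        rw [← hQ, Polynomial.natDegree_X_sub_C] at this
        omega
      have hQroots : ∀ z : k, Q.IsRoot z → 1 ≤ ‖z‖ := by
        intro z hz
        refine hroots z ?_
        rw [hQ]
        simp [Polynomial.IsRoot, hz.eq_zero]
      have hIH := IH (d - 1) (by omega) Q hdq hQroots
      have hr1 : 1 ≤ ‖r‖ := hroots r hr
      have hc0 : ‖P.coeff 0‖ = ‖r‖ * ‖Q.coeff 0‖ := by
        rw [hQ, Polynomial.mul_coeff_zero]
        simp [norm_mul]
      rcases Nat.eq_zero_or_pos n with rfl | hn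
      · exact le_rfl
      obtain ⟨j, rfl⟩ := Nat.exists_eq_add_of_lt hn
      have hcoeff : P.coeff (0 + j + 1) = Q.coeff j - r * Q.coeff (j + 1) := by
        rw [hQ, sub_mul, Polynomial.coeff_sub, Polynomial.X_mul, Polynomial.coeff_mul_X]
        simp [Polynomial.coeff_C_mul]
      rw [hcoeff, hc0]
      refine le_trans (aux_norm_sub_le_max _ _) (max_le ?_ ?_)
      · calc ‖Q.coeff j‖ ≤ ‖Q.coeff 0‖ := hIH j
          _ ≤ ‖r‖ * ‖Q.coeff 0‖ := le_mul_of_one_le_left (norm_nonneg _) hr1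
      · rw [norm_mul]
        exact mul_le_mul_of_nonneg_left (hIH (j + 1)) (norm_nonneg _)

end Aux

/-- Tame directional multiplicity forces a critical point in the disk.  Let `k` be an
algebraically closed field complete with respect to a nontrivial non-Archimedean absolute
value.  Let `m ≥ 1`, `s ≥ 0` with `m + s ≥ 2`, and let `f, g` be polynomials with all
coefficients of absolute value `≤ 1` such that `|f.coeff i| < 1` for `i < m + s`,
`|f.coeff (m+s)| = 1`, `|g.coeff j| < 1` for `j < s`, and `|g.coeff s| = 1`.  If the image of
`m` in `k` has absolute value `1` (the residue characteristic does not divide `m`), then the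
Wronskian `f'·g − f·g'` has a root `x` with `|x| < 1`. -/
theorem tame_direction_gives_critical_point {k : Type*} [NontriviallyNormedField k]
    [IsAlgClosed k] [CompleteSpace k] [IsUltrametricDist k]
    (m s : ℕ) (hm : 1 ≤ m) (hms : 2 ≤ m + s) (f g : k[X])
    (hf1 : ∀ i, ‖f.coeff i‖ ≤ 1) (hg1 : ∀ j, ‖g.coeff j‖ ≤ 1)
    (hfsmall : ∀ i < m + s, ‖f.coeff i‖ < 1) (hftop : ‖f.coeff (m + s)‖ = 1)
    (hgsmall : ∀ j < s, ‖g.coeff j‖ < 1) (hgtop : ‖g.coeff s‖ = 1)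
    (hmk : ‖(m : k)‖ = 1) :
    ∃ x : k, ‖x‖ < 1 ∧ (derivative f * g - f * derivative g).IsRoot x := by
  classical
  set W := derivative f * g - f * derivative g with hWdef
  by_contra hcon
  push_neg at hcon
  have hroots : ∀ z : k, W.IsRoot z → 1 ≤ ‖z‖ := by
    intro z hz
    by_contra h
    exact hcon z (not_le.mp h) hz
  obtain ⟨n, hn⟩ : ∃ n, n + 1 = m + (s + s) := ⟨m + (s + s) - 1, by omega⟩
  -- The coefficient of `W` in degree `n = m + 2s - 1`
  have e1 : ∑ p ∈ Finset.HasAntidiagonal.antidiagonal (n + 1), (p.1 : k) * (f.coeff p.1 * g.coeff p.2)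
      = (derivative f * g).coeff n := by
    rw [Finset.Nat.sum_antidiagonal_succ, Polynomial.coeff_mul]
    simp only [Nat.cast_zero, zero_mul, zero_add, Polynomial.coeff_derivative]
    refine Finset.sum_congr rfl fun p _ => ?_
    push_cast
    ring
  have e2 : ∑ p ∈ Finset.HasAntidiagonal.antidiagonal (n + 1), (p.2 : k) * (f.coeff p.1 * g.coeff p.2)
      = (f * derivative g).coeff n := by
    rw [Finset.Nat.sum_antidiagonal_succ', Polynomial.coeff_mul]
    simp only [Nat.cast_zero, zero_mul, zero_add, Polynomial.coeff_derivative]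
    refine Finset.sum_congr rfl fun p _ => ?_
    push_cast
    ring
  have hA : W.coeff n = ∑ p ∈ Finset.HasAntidiagonal.antidiagonal (n + 1),
      ((p.1 : k) - (p.2 : k)) * (f.coeff p.1 * g.coeff p.2) := by
    rw [hWdef, Polynomial.coeff_sub, ← e1, ← e2, ← Finset.sum_sub_distrib]
    exact Finset.sum_congr rfl fun p _ => by ring
  have hmem : ((m + s, s) : ℕ × ℕ) ∈ Finset.HasAntidiagonal.antidiagonal (n + 1) := by
    rw [Finset.HasAntidiagonal.mem_antidiagonal]; omega
  rw [← Finset.add_sum_erase _ _ hmem] at hA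
  have hmain : ‖((↑(m + s) : k) - ↑s) * (f.coeff (m + s) * g.coeff s)‖ = 1 := by
    have hcast : ((↑(m + s) : k) - ↑s) = (m : k) := by push_cast; ring
    rw [hcast, norm_mul, norm_mul, hmk, hftop, hgtop]; ring
  have hrest : ‖∑ p ∈ (Finset.HasAntidiagonal.antidiagonal (n + 1)).erase (m + s, s),
      ((p.1 : k) - (p.2 : k)) * (f.coeff p.1 * g.coeff p.2)‖ < 1 := by
    apply aux_norm_sum_lt_one
    intro p hp
    obtain ⟨hpne, hpmem⟩ := Finset.mem_erase.mp hp
    rw [Finset.HasAntidiagonal.mem_antidiagonal] at hpmem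
    have hcast : ‖((p.1 : k) - (p.2 : k))‖ ≤ 1 :=
      le_trans (aux_norm_sub_le_max _ _) (max_le
        (IsUltrametricDist.norm_natCast_le_one k p.1)
        (IsUltrametricDist.norm_natCast_le_one k p.2))
    rcases lt_trichotomy p.1 (m + s) with h1 | h1 | h1
    · exact aux_mul_lt_right hcast (aux_mul_lt_left (hfsmall p.1 h1) (hg1 p.2))
    · exact absurd (Prod.ext h1 (by omega)) hpne
    · exact aux_mul_lt_right hcast (aux_mul_lt_right (hf1 p.1) (hgsmall p.2 (by omega)))
  have hWn : ‖W.coeff n‖ = 1 := by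
    rw [hA, IsUltrametricDist.norm_add_eq_max_of_norm_ne_norm
      (by rw [hmain]; exact (hrest.trans_le (le_of_eq rfl)).ne')]
    rw [hmain]
    exact max_eq_left hrest.le
  have hW0 : ‖W.coeff 0‖ < 1 := by
    have e : W.coeff 0 = f.coeff 1 * g.coeff 0 - f.coeff 0 * g.coeff 1 := by
      simp [hWdef, Polynomial.mul_coeff_zero, Polynomial.coeff_derivative]
    rw [e]
    refine lt_of_le_of_lt (aux_norm_sub_le_max _ _) (max_lt ?_ ?_)
    · rcases Nat.eq_zero_or_pos s with rfl | hs
      · exact aux_mul_lt_left (hfsmall 1 (by omega)) (hg1 0)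
      · exact aux_mul_lt_right (hf1 1) (hgsmall 0 hs)
    · exact aux_mul_lt_left (hfsmall 0 (by omega)) (hg1 1)
  have hkey := aux_coeff_le_coeff_zero W.natDegree W rfl hroots n
  rw [hWn] at hkey
  linarith
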